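/- The set {001, 010, 011, 101} is a 1-identifying code in the undirected binary de Bruijn graph B(2,3). -/

import Mathlib

/-- The undirected de Bruijn graph `B(d,n)`: vertices are strings of length `n`
over the alphabet `{0, ..., d-1}`, and two distinct strings `x`, `y` are adjacent
iff `x_{i+1} = y_i` for all valid `i`, or `y_{i+1} = x_i` for all valid `i`. -/
def deBruijnGraph (d n : ℕ) : SimpleGraph (Fin n → Fin d) where
  Adj x y := x ≠ y ∧
    ((∀ i : Fin n, ∀ h : (i : ℕ) + 1 < n, x ⟨(i : ℕ) + 1, h⟩ = y i) ∨
     (∀ i : Fin n, ∀ h : (i : ℕ) + 1 < n, y ⟨(i : ℕ) + 1, h⟩ = x i))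
  symm := ⟨fun x y ⟨hxy, h⟩ => ⟨hxy.symm, h.symm⟩⟩
  loopless := ⟨fun x ⟨hxx, _⟩ => hxx rfl⟩

/-- The ball of radius `t` around a vertex `x`. -/
def ball {V : Type*} (G : SimpleGraph V) (t : ℕ) (x : V) : Set V :=
  {y | G.dist x y ≤ t}

/-- A set `S` of vertices is a `t`-identifying code if every ball of radius `t`
meets `S`, and distinct vertices have distinct identifying sets `B_t(x) ∩ S`. -/
def IsIdentifyingCode {V : Type*} (G : SimpleGraph V) (t : ℕ) (S : Set V) : Prop :=
  (∀ x : V, (ball G t x ∩ S).Nonempty) ∧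
  ∀ x y : V, x ≠ y → ball G t x ∩ S ≠ ball G t y ∩ S

instance : DecidableRel (deBruijnGraph 2 3).Adj := fun x y => by
  exact inferInstanceAs (Decidable (x ≠ y ∧ ((∀ i : Fin 3, ∀ h : (i : ℕ) + 1 < 3, x ⟨(i : ℕ) + 1, h⟩ = y i) ∨
    (∀ i : Fin 3, ∀ h : (i : ℕ) + 1 < 3, y ⟨(i : ℕ) + 1, h⟩ = x i))))

lemma vec_cases (x : Fin 3 → Fin 2) :
    x = ![0,0,0] ∨ x = ![0,0,1] ∨ x = ![0,1,0] ∨ x = ![0,1,1] ∨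
    x = ![1,0,0] ∨ x = ![1,0,1] ∨ x = ![1,1,0] ∨ x = ![1,1,1] := by
  have hx : x = ![x 0, x 1, x 2] := by funext i; fin_cases i <;> rfl
  have h2 : ∀ a : Fin 2, a = 0 ∨ a = 1 := by decide
  rcases h2 (x 0) with h0 | h0 <;> rcases h2 (x 1) with h1 | h1 <;>
    rcases h2 (x 2) with hh | hh <;>
    rw [hx, h0, h1, hh] <;> simp

lemma precon : (deBruijnGraph 2 3).Preconnected := by
  have r : ∀ x y : Fin 3 → Fin 2, (deBruijnGraph 2 3).Adj x y → (deBruijnGraph 2 3).Reachable x y :=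
    fun _ _ h => h.reachable
  have h : ∀ x : Fin 3 → Fin 2, (deBruijnGraph 2 3).Reachable ![0,0,0] x := by
    have a1 : (deBruijnGraph 2 3).Reachable ![0,0,0] ![0,0,1] := r _ _ (by decide)
    have a2 : (deBruijnGraph 2 3).Reachable ![0,0,0] ![0,1,0] := a1.trans (r _ _ (by decide))
    have a3 : (deBruijnGraph 2 3).Reachable ![0,0,0] ![0,1,1] := a1.trans (r _ _ (by decide))
    have a4 : (deBruijnGraph 2 3).Reachable ![0,0,0] ![1,0,0] := r _ _ (by decide)
    have a5 : (deBruijnGraph 2 3).Reachable ![0,0,0] ![1,0,1] := a2.trans (r _ _ (by decide))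
    have a6 : (deBruijnGraph 2 3).Reachable ![0,0,0] ![1,1,0] := a3.trans (r _ _ (by decide))
    have a7 : (deBruijnGraph 2 3).Reachable ![0,0,0] ![1,1,1] := a3.trans (r _ _ (by decide))
    intro x
    rcases vec_cases x with h|h|h|h|h|h|h|h <;> rw [h] <;>
      first
      | exact SimpleGraph.Reachable.refl _
      | exact a1 | exact a2 | exact a3 | exact a4 | exact a5 | exact a6 | exact a7
  exact fun x y => (h x).symm.trans (h y)

lemma mem_ball_one (x y : Fin 3 → Fin 2) :
    y ∈ ball (deBruijnGraph 2 3) 1 x ↔ x = y ∨ (deBruijnGraph 2 3).Adj x y := by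
  show (deBruijnGraph 2 3).dist x y ≤ 1 ↔ _
  constructor
  · intro h
    rcases Nat.le_one_iff_eq_zero_or_eq_one.mp h with h0 | h1
    · exact Or.inl (((precon x y).dist_eq_zero_iff).mp h0)
    · exact Or.inr (SimpleGraph.dist_eq_one_iff_adj.mp h1)
  · rintro (rfl | hadj)
    · simp [SimpleGraph.dist_self]
    · exact le_of_eq (SimpleGraph.dist_eq_one_iff_adj.mpr hadj)

theorem explicit_code_B23 :
    IsIdentifyingCode (deBruijnGraph 2 3) 1
      ({![0,0,1], ![0,1,0], ![0,1,1], ![1,0,1]} : Set (Fin 3 → Fin 2)) := by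
  constructor
  · intro x
    rcases vec_cases x with h|h|h|h|h|h|h|h <;> subst h
    · exact ⟨![0,0,1], (mem_ball_one _ _).mpr (Or.inr (by decide)), by simp⟩
    · exact ⟨![0,0,1], (mem_ball_one _ _).mpr (Or.inl rfl), by simp⟩
    · exact ⟨![0,1,0], (mem_ball_one _ _).mpr (Or.inl rfl), by simp⟩
    · exact ⟨![0,1,1], (mem_ball_one _ _).mpr (Or.inl rfl), by simp⟩
    · exact ⟨![0,0,1], (mem_ball_one _ _).mpr (Or.inr (by decide)), by simp⟩
    · exact ⟨![1,0,1], (mem_ball_one _ _).mpr (Or.inl rfl), by simp⟩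
    · exact ⟨![1,0,1], (mem_ball_one _ _).mpr (Or.inr (by decide)), by simp⟩
    · exact ⟨![0,1,1], (mem_ball_one _ _).mpr (Or.inr (by decide)), by simp⟩
  · intro x y hxy heq
    apply hxy
    have key : ∀ x y : Fin 3 → Fin 2,
        ((x = ![0,0,1] ∨ (deBruijnGraph 2 3).Adj x ![0,0,1]) ↔
         (y = ![0,0,1] ∨ (deBruijnGraph 2 3).Adj y ![0,0,1])) →
        ((x = ![0,1,0] ∨ (deBruijnGraph 2 3).Adj x ![0,1,0]) ↔
         (y = ![0,1,0] ∨ (deBruijnGraph 2 3).Adj y ![0,1,0])) →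
        ((x = ![0,1,1] ∨ (deBruijnGraph 2 3).Adj x ![0,1,1]) ↔
         (y = ![0,1,1] ∨ (deBruijnGraph 2 3).Adj y ![0,1,1])) →
        ((x = ![1,0,1] ∨ (deBruijnGraph 2 3).Adj x ![1,0,1]) ↔
         (y = ![1,0,1] ∨ (deBruijnGraph 2 3).Adj y ![1,0,1])) → x = y := by decide
    have e : ∀ z : Fin 3 → Fin 2,
        z ∈ ({![0,0,1], ![0,1,0], ![0,1,1], ![1,0,1]} : Set (Fin 3 → Fin 2)) →
        ((x = z ∨ (deBruijnGraph 2 3).Adj x z) ↔ (y = z ∨ (deBruijnGraph 2 3).Adj y z)) := by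
      intro z hz
      have := Set.ext_iff.mp heq z
      simp only [Set.mem_inter_iff, mem_ball_one] at this
      exact ⟨fun h => (this.mp ⟨h, hz⟩).1, fun h => (this.mpr ⟨h, hz⟩).1⟩
    exact key x y (e _ (by simp)) (e _ (by simp)) (e _ (by simp)) (e _ (by simp))
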